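/- Fix a finite alphabet K, genome length n, X = (Fin n → K); for each i ∈ Fin n let A_i = (α_i(a,b)) be a connected infinitesimal matrix on K (irreducible) with strictly positive stationary distribution q_i; fix κ ≥ 0 and for each I ⊆ Fin n a symmetric nonnegative similarity function φ on pairs of I-substrings. Then the product distribution q_Λ(x) = ∏_i q_i(x_i) is the unique fixed point of the mutation–recombination equation: if μ is a probability measure on X for which ∑_i ∑_{y_i} ( α_i(y_i,x_i)·μ(x_{Λ∖i}, y_i) − α_i(x_i,y_i)·μ(x) ) + κ·∑_{I⊆Λ} ∑_{y_I} ( φ(y_I,x_I)·μ_I(x_I)·μ(x_{Λ∖I}, y_I) − φ(x_I,y_I)·μ_I(y_I)·μ(x) ) = 0 for all x ∈ X, then μ = q_Λ. -/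

import Mathlib

/-- The substring of a genome `x : Fin n → K` on a subset `I` of positions. -/
def subword {K : Type*} {n : ℕ} (I : Finset (Fin n)) (x : Fin n → K) : ↥I → K :=
  fun i => x i.1

/-- The marginal distribution of a measure `μ` on the genome space on a subset `I`. -/
def marginal {K : Type*} [Fintype K] [DecidableEq K] {n : ℕ}
    (μ : (Fin n → K) → ℝ) (I : Finset (Fin n)) (a : ↥I → K) : ℝ :=
  ∑ x : Fin n → K, if subword I x = a then μ x else 0

/-- `(x_{Λ∖I}, a)`: the genome obtained from `x` by replacing its restriction to `I`
with `a`. -/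
def substGenome {K : Type*} {n : ℕ} (I : Finset (Fin n)) (x : Fin n → K) (a : ↥I → K) :
    Fin n → K :=
  fun j => if h : j ∈ I then a ⟨j, h⟩ else x j

/-- The right-hand side of the mutation–recombination equation. -/
def mutRecRHS {K : Type*} [Fintype K] [DecidableEq K] {n : ℕ}
    (α : Fin n → K → K → ℝ) (κ : ℝ)
    (φ : (I : Finset (Fin n)) → (↥I → K) → (↥I → K) → ℝ)
    (μ : (Fin n → K) → ℝ) (x : Fin n → K) : ℝ :=
  (∑ i : Fin n, ∑ b : K,
      (α i b (x i) * μ (Function.update x i b) - α i (x i) b * μ x))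
  + κ * ∑ I : Finset (Fin n), ∑ a : ↥I → K,
      (φ I a (subword I x) * marginal μ I (subword I x) * μ (substGenome I x a)
        - φ I (subword I x) a * marginal μ I a * μ x)

open Finset Function Real

section aux
variable {K : Type*} [Fintype K] [DecidableEq K] {n : ℕ}

lemma subword_substGenome (I : Finset (Fin n)) (x : Fin n → K) (a : ↥I → K) :
    subword I (substGenome I x a) = a := by
  funext i; simp [subword, substGenome, i.2]

lemma substGenome_substGenome (I : Finset (Fin n)) (x : Fin n → K) (a b : ↥I → K) :
    substGenome I (substGenome I x a) b = substGenome I x b := by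
  funext j; by_cases h : j ∈ I <;> simp [substGenome, h]

lemma substGenome_subword (I : Finset (Fin n)) (x : Fin n → K) :
    substGenome I x (subword I x) = x := by
  funext j; by_cases h : j ∈ I <;> simp [substGenome, subword, h]

lemma sum_subst_invol (I : Finset (Fin n)) (F : (Fin n → K) → (↥I → K) → ℝ) :
    ∑ x : Fin n → K, ∑ a : ↥I → K, F (substGenome I x a) (subword I x)
      = ∑ x : Fin n → K, ∑ a : ↥I → K, F x a := by
  rw [← Fintype.sum_prod_type', ← Fintype.sum_prod_type']
  exact Equiv.sum_comp
    { toFun := fun p => (substGenome I p.1 p.2, subword I p.1)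
      invFun := fun p => (substGenome I p.1 p.2, subword I p.1)
      left_inv := fun p => by
        simp [substGenome_substGenome, subword_substGenome, substGenome_subword]
      right_inv := fun p => by
        simp [substGenome_substGenome, subword_substGenome, substGenome_subword] }
    (fun p => F p.1 p.2)

lemma sum_update_invol (i : Fin n) (F : (Fin n → K) → K → ℝ) :
    ∑ x : Fin n → K, ∑ b : K, F (Function.update x i b) (x i)
      = ∑ x : Fin n → K, ∑ b : K, F x b := by
  rw [← Fintype.sum_prod_type', ← Fintype.sum_prod_type']
  exact Equiv.sum_comp
    { toFun := fun p => (Function.update p.1 i p.2, p.1 i)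
      invFun := fun p => (Function.update p.1 i p.2, p.1 i)
      left_inv := fun p => by
        simp [Function.update_idem]
      right_inv := fun p => by
        simp [Function.update_idem] }
    (fun p => F p.1 p.2)

lemma marginal_nonneg (μ : (Fin n → K) → ℝ) (hμ : ∀ x, 0 ≤ μ x) (I : Finset (Fin n))
    (a : ↥I → K) : 0 ≤ marginal μ I a :=
  Finset.sum_nonneg fun x _ => by split <;> [exact hμ x; exact le_rfl]

lemma marginal_pos (μ : (Fin n → K) → ℝ) (hμ : ∀ x, 0 < μ x) (I : Finset (Fin n))
    (x₀ : Fin n → K) (a : ↥I → K) : 0 < marginal μ I a := by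
  apply Finset.sum_pos' (fun x _ => by split <;> [exact (hμ x).le; exact le_rfl])
  exact ⟨substGenome I x₀ a, Finset.mem_univ _, by
    rw [if_pos (subword_substGenome I x₀ a)]; exact hμ _⟩

lemma sum_mul_subword (μ : (Fin n → K) → ℝ) (I : Finset (Fin n)) (G : (↥I → K) → ℝ) :
    ∑ x : Fin n → K, μ x * G (subword I x) = ∑ a : ↥I → K, marginal μ I a * G a := by
  unfold marginal
  simp_rw [Finset.sum_mul, ite_mul, zero_mul]
  rw [Finset.sum_comm]
  refine Finset.sum_congr rfl fun x _ => ?_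
  rw [Finset.sum_ite_eq univ (subword I x) (fun a => μ x * G a)]
  simp

lemma prod_update (q : Fin n → K → ℝ) (x : Fin n → K) (i : Fin n) (b : K) :
    (∏ j, q j (Function.update x i b j)) * q i (x i) = (∏ j, q j (x j)) * q i b := by
  rw [← Finset.mul_prod_erase univ (fun j => q j (Function.update x i b j)) (mem_univ i),
      ← Finset.mul_prod_erase univ (fun j => q j (x j)) (mem_univ i)]
  have : ∏ j ∈ univ.erase i, q j (Function.update x i b j)
      = ∏ j ∈ univ.erase i, q j (x j) :=
    Finset.prod_congr rfl fun j hj => by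
      rw [Function.update_of_ne (Finset.ne_of_mem_erase hj)]
  rw [this, Function.update_self]; ring

lemma prod_subst (q : Fin n → K → ℝ) (I : Finset (Fin n)) (x : Fin n → K) (a : ↥I → K) :
    (∏ j, q j (substGenome I x a j)) * (∏ i : ↥I, q i.1 (x i.1)) =
    (∏ j, q j (x j)) * (∏ i : ↥I, q i.1 (a i)) := by
  rw [← Finset.prod_mul_prod_compl I (fun j => q j (substGenome I x a j)),
      ← Finset.prod_mul_prod_compl I (fun j => q j (x j))]
  have h1 : ∏ j ∈ Iᶜ, q j (substGenome I x a j) = ∏ j ∈ Iᶜ, q j (x j) :=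
    Finset.prod_congr rfl fun j hj => by
      rw [substGenome]; rw [dif_neg (by simpa using hj)]
  have h2 : ∏ j ∈ I, q j (substGenome I x a j) = ∏ i : ↥I, q i.1 (a i) := by
    rw [← Finset.prod_coe_sort]
    exact Fintype.prod_congr _ _ fun i => by simp [substGenome, i.2]
  have h3 : ∏ j ∈ I, q j (x j) = ∏ i : ↥I, q i.1 (x i.1) :=
    (Finset.prod_coe_sort _ _).symm
  rw [h1, h2, h3]; ring

lemma reach {α : Fin n → K → K → ℝ}
    (hα_conn : ∀ i : Fin n, ∀ a b : K,
      Relation.ReflTransGen (fun u v => 0 < α i u v) a b)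
    (P : (Fin n → K) → Prop)
    (hstep : ∀ x i c, 0 < α i (x i) c → P x → P (Function.update x i c)) :
    ∀ x y, P x → P y := by
  have step2 : ∀ (i : Fin n) (x : Fin n → K) (b : K), P x → P (Function.update x i b) := by
    intro i x b hx
    have key : ∀ a b : K, Relation.ReflTransGen (fun u v => 0 < α i u v) a b →
        ∀ z : Fin n → K, P z → z i = a → P (Function.update z i b) := by
      intro a b hab
      induction hab with
      | refl => intro z hz hza; rwa [← hza, Function.update_eq_self]
      | tail h1 h2 ih =>
        intro z hz hza
        have hm := ih z hz hza
        have := hstep _ i _ (by simpa using h2) hm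
        rwa [Function.update_idem] at this
    exact key (x i) b (hα_conn i (x i) b) x hx rfl
  have all : ∀ s : Finset (Fin n), ∀ z w : Fin n → K,
      (∀ j, j ∉ s → z j = w j) → P z → P w := by
    intro s
    induction s using Finset.induction_on with
    | empty =>
      intro z w hzw hz
      have hzw' : z = w := funext fun j => hzw j (by simp)
      rwa [hzw'] at hz
    | @insert i s _ ih =>
      intro z w hzw hz
      refine ih (Function.update z i (w i)) w (fun j hj => ?_) (step2 i z (w i) hz)
      by_cases hji : j = i
      · subst hji; simp
      · rw [Function.update_of_ne hji]
        exact hzw j (by simp [hji, hj])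
  exact fun x y hx => all Finset.univ x y (fun j hj => absurd (Finset.mem_univ j) hj) hx

end aux

set_option maxHeartbeats 4000000 in
/-- the product distribution `q_Λ(x) = ∏_i q_i(x_i)` is the unique fixed
point of the mutation–recombination equation: every probability measure `μ` at which the
right-hand side vanishes identically equals `q_Λ`. -/
theorem unique_fixed_point
    {K : Type*} [Fintype K] [DecidableEq K] {n : ℕ}
    (α : Fin n → K → K → ℝ)
    (hα_off : ∀ i : Fin n, ∀ a b : K, a ≠ b → 0 ≤ α i a b)
    (hα_diag : ∀ i : Fin n, ∀ a : K, α i a a = -∑ b ∈ Finset.univ.erase a, α i a b)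
    (hα_conn : ∀ i : Fin n, ∀ a b : K,
      Relation.ReflTransGen (fun u v => 0 < α i u v) a b)
    (q : Fin n → K → ℝ)
    (hq_pos : ∀ i a, 0 < q i a)
    (hq_sum : ∀ i, ∑ a, q i a = 1)
    (hq_stat : ∀ i : Fin n, ∀ b : K, ∑ a, q i a * α i a b = 0)
    (κ : ℝ) (hκ : 0 ≤ κ)
    (φ : (I : Finset (Fin n)) → (↥I → K) → (↥I → K) → ℝ)
    (hφ_symm : ∀ I a b, φ I a b = φ I b a)
    (hφ_nonneg : ∀ I a b, 0 ≤ φ I a b)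
    (μ : (Fin n → K) → ℝ)
    (hμ_nonneg : ∀ x, 0 ≤ μ x)
    (hμ_sum : ∑ x, μ x = 1)
    (hfix : ∀ x : Fin n → K, mutRecRHS α κ φ μ x = 0) :
    μ = fun z => ∏ i, q i (z i) := by
  classical
  set Q : (Fin n → K) → ℝ := fun x => ∏ i, q i (x i) with hQdef
  have hQpos : ∀ x, 0 < Q x := fun x => Finset.prod_pos fun i _ => hq_pos i (x i)
  have hrow : ∀ i (a : K), ∑ b, α i a b = 0 := by
    intro i a
    rw [← Finset.add_sum_erase _ _ (mem_univ a), hα_diag i a]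
    ring
  -- zero propagation along mutation transitions
  have hzero : ∀ x : Fin n → K, μ x = 0 → ∀ i b, 0 < α i b (x i) →
      μ (Function.update x i b) = 0 := by
    intro x hx i b hαb
    by_cases hbx : b = x i
    · rw [hbx, Function.update_eq_self]; exact hx
    · have hMnn : ∀ (j : Fin n) (c : K),
          0 ≤ α j c (x j) * μ (Function.update x j c) - α j (x j) c * μ x := by
        intro j c
        rw [hx, mul_zero, sub_zero]
        by_cases hc : c = x j
        · rw [hc, Function.update_eq_self, hx, mul_zero]
        · exact mul_nonneg (hα_off j c (x j) hc) (hμ_nonneg _)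
      have hRnn : 0 ≤ ∑ I : Finset (Fin n), ∑ a : ↥I → K,
          (φ I a (subword I x) * marginal μ I (subword I x) * μ (substGenome I x a)
            - φ I (subword I x) a * marginal μ I a * μ x) := by
        refine Finset.sum_nonneg fun I _ => Finset.sum_nonneg fun a _ => ?_
        rw [hx, mul_zero, sub_zero]
        exact mul_nonneg (mul_nonneg (hφ_nonneg _ _ _)
          (marginal_nonneg μ hμ_nonneg I _)) (hμ_nonneg _)
      have hfx := hfix x
      unfold mutRecRHS at hfx
      have hM0 : ∑ j : Fin n, ∑ c : K,
          (α j c (x j) * μ (Function.update x j c) - α j (x j) c * μ x) = 0 := by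
        have hMnn' : 0 ≤ ∑ j : Fin n, ∑ c : K,
            (α j c (x j) * μ (Function.update x j c) - α j (x j) c * μ x) :=
          Finset.sum_nonneg fun j _ => Finset.sum_nonneg fun c _ => hMnn j c
        nlinarith [mul_nonneg hκ hRnn]
      have h1 := (Finset.sum_eq_zero_iff_of_nonneg
        (fun j _ => Finset.sum_nonneg fun c _ => hMnn j c)).1 hM0 i (Finset.mem_univ i)
      have h2 := (Finset.sum_eq_zero_iff_of_nonneg
        (fun c _ => hMnn i c)).1 h1 b (Finset.mem_univ b)
      rw [hx, mul_zero, sub_zero] at h2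
      rcases mul_eq_zero.1 h2 with h' | h'
      · exact absurd h' (ne_of_gt hαb)
      · exact h'
  obtain ⟨x₀, -, hx₀⟩ := Finset.exists_ne_zero_of_sum_ne_zero
    (by rw [hμ_sum]; exact one_ne_zero : ∑ x : Fin n → K, μ x ≠ 0)
  have hμpos : ∀ x, 0 < μ x := by
    have hx₀pos : 0 < μ x₀ := lt_of_le_of_ne (hμ_nonneg x₀) (Ne.symm hx₀)
    refine fun y => reach hα_conn (fun z => 0 < μ z) ?_ x₀ y hx₀pos
    intro z i c hαc hz
    show 0 < μ (Function.update z i c)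
    rcases lt_or_eq_of_le (hμ_nonneg (Function.update z i c)) with hlt | heq0
    · exact hlt
    · exfalso
      have h0 : μ (Function.update z i c) = 0 := heq0.symm
      have := hzero _ h0 i (z i) (by simpa using hαc)
      rw [Function.update_idem, Function.update_eq_self] at this
      exact absurd this (ne_of_gt hz)
  set h : (Fin n → K) → ℝ := fun x => μ x / Q x with hhdef
  have hhpos : ∀ x, 0 < h x := fun x => div_pos (hμpos x) (hQpos x)
  have hμQ : ∀ x, μ x = Q x * h x := fun x => by
    simp only [hhdef]
    rw [mul_comm]
    exact (div_mul_cancel₀ (μ x) (ne_of_gt (hQpos x))).symm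
  set L : (Fin n → K) → ℝ := fun x => Real.log (h x) with hLdef
  have hlogdiff : ∀ x y : Fin n → K, L y - L x = Real.log (h y / h x) := fun x y => by
    rw [hLdef]; exact (Real.log_div (ne_of_gt (hhpos y)) (ne_of_gt (hhpos x))).symm
  -- the master identity
  have key0 : (∑ x : Fin n → K, L x * (∑ i, ∑ b,
        (α i b (x i) * μ (Function.update x i b) - α i (x i) b * μ x)))
      + κ * ∑ I : Finset (Fin n), (∑ x : Fin n → K, L x * (∑ a : ↥I → K,
          (φ I a (subword I x) * marginal μ I (subword I x) * μ (substGenome I x a)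
            - φ I (subword I x) a * marginal μ I a * μ x))) = 0 := by
    have h0 : ∑ x : Fin n → K, L x * mutRecRHS α κ φ μ x = 0 :=
      Finset.sum_eq_zero fun x _ => by rw [hfix x, mul_zero]
    rw [← h0]
    unfold mutRecRHS
    simp_rw [mul_add, Finset.sum_add_distrib]
    congr 1
    simp_rw [Finset.mul_sum]
    rw [Finset.sum_comm]
    refine Finset.sum_congr rfl fun I _ => Finset.sum_congr rfl fun x _ => ?_
    refine Finset.sum_congr rfl fun a _ => ?_
    ring
  -- mutation part rewritten
  have hEM_T : (∑ x : Fin n → K, L x * (∑ i, ∑ b,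
        (α i b (x i) * μ (Function.update x i b) - α i (x i) b * μ x)))
      = ∑ x : Fin n → K, ∑ i, ∑ c,
          μ x * α i (x i) c * (L (Function.update x i c) - L x) := by
    have hiv : ∀ i : Fin n,
        ∑ x : Fin n → K, ∑ b : K, L (Function.update x i b) * (α i (x i) b * μ x)
          = ∑ x : Fin n → K, ∑ b : K, L x * (α i b (x i) * μ (Function.update x i b)) := by
      intro i
      have := sum_update_invol i
        (F := fun x b => L x * (α i b (x i) * μ (Function.update x i b)))
      simpa using this
    calc ∑ x : Fin n → K, L x * (∑ i, ∑ b,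
          (α i b (x i) * μ (Function.update x i b) - α i (x i) b * μ x))
        = ∑ x : Fin n → K, ∑ i, ∑ b,
            (L x * (α i b (x i) * μ (Function.update x i b))
              - L x * (α i (x i) b * μ x)) := by
          simp_rw [Finset.mul_sum, mul_sub]
      _ = ∑ i, ∑ x : Fin n → K, ∑ b,
            (L x * (α i b (x i) * μ (Function.update x i b))
              - L x * (α i (x i) b * μ x)) := Finset.sum_comm
      _ = ∑ i, ((∑ x : Fin n → K, ∑ b, L x * (α i b (x i) * μ (Function.update x i b)))
            - ∑ x : Fin n → K, ∑ b, L x * (α i (x i) b * μ x)) := by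
          simp_rw [Finset.sum_sub_distrib]
      _ = ∑ i, ((∑ x : Fin n → K, ∑ b, L (Function.update x i b) * (α i (x i) b * μ x))
            - ∑ x : Fin n → K, ∑ b, L x * (α i (x i) b * μ x)) := by
          refine Finset.sum_congr rfl fun i _ => ?_
          rw [hiv i]
      _ = ∑ i, ∑ x : Fin n → K, ∑ b,
            (L (Function.update x i b) * (α i (x i) b * μ x)
              - L x * (α i (x i) b * μ x)) := by
          simp_rw [Finset.sum_sub_distrib]
      _ = ∑ x : Fin n → K, ∑ i, ∑ b,
            (L (Function.update x i b) * (α i (x i) b * μ x)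
              - L x * (α i (x i) b * μ x)) := Finset.sum_comm
      _ = ∑ x : Fin n → K, ∑ i, ∑ c,
            μ x * α i (x i) c * (L (Function.update x i c) - L x) := by
          refine Finset.sum_congr rfl fun x _ => Finset.sum_congr rfl fun i _ =>
            Finset.sum_congr rfl fun c _ => ?_
          ring
  have hT_le : ∀ (x : Fin n → K) (i : Fin n) (c : K),
      μ x * α i (x i) c * (L (Function.update x i c) - L x)
        ≤ α i (x i) c * (Q x * h (Function.update x i c) - μ x) := by
    intro x i c
    by_cases hc : c = x i
    · rw [hc, Function.update_eq_self, ← hμQ x]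
      simp
    · have hα0 : 0 ≤ α i (x i) c := hα_off i (x i) c (Ne.symm hc)
      have hy := hhpos (Function.update x i c)
      have hx' := hhpos x
      have hb : μ x * (L (Function.update x i c) - L x)
          ≤ Q x * h (Function.update x i c) - μ x := by
        rw [hlogdiff x (Function.update x i c)]
        have h1 : Real.log (h (Function.update x i c) / h x)
            ≤ h (Function.update x i c) / h x - 1 :=
          Real.log_le_sub_one_of_pos (div_pos hy hx')
        have h2 : μ x * (h (Function.update x i c) / h x - 1)
            = Q x * h (Function.update x i c) - μ x := by
          rw [hμQ x]
          field_simp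
        calc μ x * Real.log (h (Function.update x i c) / h x)
            ≤ μ x * (h (Function.update x i c) / h x - 1) :=
              mul_le_mul_of_nonneg_left h1 (hμ_nonneg x)
          _ = Q x * h (Function.update x i c) - μ x := h2
      calc μ x * α i (x i) c * (L (Function.update x i c) - L x)
          = α i (x i) c * (μ x * (L (Function.update x i c) - L x)) := by ring
        _ ≤ α i (x i) c * (Q x * h (Function.update x i c) - μ x) :=
            mul_le_mul_of_nonneg_left hb hα0
  have hBd0 : ∑ x : Fin n → K, ∑ i, ∑ c,
      α i (x i) c * (Q x * h (Function.update x i c) - μ x) = 0 := by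
    have step1 : ∀ (x : Fin n → K) (i : Fin n),
        ∑ c, α i (x i) c * (Q x * h (Function.update x i c) - μ x)
          = ∑ c, α i (x i) c * (Q x * h (Function.update x i c)) := by
      intro x i
      simp_rw [mul_sub]
      rw [Finset.sum_sub_distrib]
      have hs : ∑ c, α i (x i) c * μ x = (∑ c, α i (x i) c) * μ x :=
        (Finset.sum_mul _ _ _).symm
      rw [hs, hrow, zero_mul, sub_zero]
    simp_rw [step1]
    rw [Finset.sum_comm]
    refine Finset.sum_eq_zero fun i _ => ?_
    have hiv : ∑ x : Fin n → K, ∑ c : K, α i (x i) c * (Q x * h (Function.update x i c))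
        = ∑ x : Fin n → K, ∑ c : K, α i c (x i) * (Q (Function.update x i c) * h x) := by
      have := sum_update_invol i
        (F := fun x c => α i (x i) c * (Q x * h (Function.update x i c)))
      simpa using this.symm
    rw [hiv]
    refine Finset.sum_eq_zero fun x _ => ?_
    have hQu : ∀ c, Q (Function.update x i c) = Q x * q i c / q i (x i) := by
      intro c
      rw [eq_div_iff (ne_of_gt (hq_pos i (x i)))]
      simpa [hQdef] using prod_update q x i c
    calc ∑ c, α i c (x i) * (Q (Function.update x i c) * h x)
        = ∑ c, (Q x * h x / q i (x i)) * (q i c * α i c (x i)) := by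
          refine Finset.sum_congr rfl fun c _ => ?_
          rw [hQu c]; ring
      _ = (Q x * h x / q i (x i)) * ∑ c, q i c * α i c (x i) :=
          (Finset.mul_sum _ _ _).symm
      _ = 0 := by rw [hq_stat i (x i), mul_zero]
  have hSI_le : ∀ I : Finset (Fin n), (∑ x : Fin n → K, L x * (∑ a : ↥I → K,
      (φ I a (subword I x) * marginal μ I (subword I x) * μ (substGenome I x a)
        - φ I (subword I x) a * marginal μ I a * μ x))) ≤ 0 := by
    intro I
    have hmpos : ∀ a : ↥I → K, 0 < marginal μ I a := fun a => marginal_pos μ hμpos I x₀ a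
    have hqIpos : ∀ a : ↥I → K, 0 < ∏ i : ↥I, q i.1 (a i) :=
      fun a => Finset.prod_pos fun i _ => hq_pos _ _
    -- Step A : rewrite the entropy production in jump form
    have stepA : (∑ x : Fin n → K, L x * (∑ a : ↥I → K,
        (φ I a (subword I x) * marginal μ I (subword I x) * μ (substGenome I x a)
          - φ I (subword I x) a * marginal μ I a * μ x)))
        = ∑ x : Fin n → K, ∑ b : ↥I → K,
            μ x * (φ I (subword I x) b * marginal μ I b)
              * (L (substGenome I x b) - L x) := by
      have hiv : ∑ x : Fin n → K, ∑ a : ↥I → K,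
          L x * (φ I a (subword I x) * marginal μ I (subword I x) * μ (substGenome I x a))
          = ∑ x : Fin n → K, ∑ a : ↥I → K,
            L (substGenome I x a) * (φ I (subword I x) a * marginal μ I a * μ x) := by
        have := sum_subst_invol I (F := fun x a =>
          L x * (φ I a (subword I x) * marginal μ I (subword I x) * μ (substGenome I x a)))
        simpa [subword_substGenome, substGenome_substGenome, substGenome_subword]
          using this.symm
      calc (∑ x : Fin n → K, L x * (∑ a : ↥I → K,
          (φ I a (subword I x) * marginal μ I (subword I x) * μ (substGenome I x a)
            - φ I (subword I x) a * marginal μ I a * μ x)))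
          = ∑ x : Fin n → K, ∑ a : ↥I → K,
              (L x * (φ I a (subword I x) * marginal μ I (subword I x) * μ (substGenome I x a))
                - L x * (φ I (subword I x) a * marginal μ I a * μ x)) := by
            simp_rw [Finset.mul_sum, mul_sub]
        _ = (∑ x : Fin n → K, ∑ a : ↥I → K,
              L x * (φ I a (subword I x) * marginal μ I (subword I x) * μ (substGenome I x a)))
            - ∑ x : Fin n → K, ∑ a : ↥I → K,
              L x * (φ I (subword I x) a * marginal μ I a * μ x) := by
            simp_rw [Finset.sum_sub_distrib]
        _ = (∑ x : Fin n → K, ∑ a : ↥I → K,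
              L (substGenome I x a) * (φ I (subword I x) a * marginal μ I a * μ x))
            - ∑ x : Fin n → K, ∑ a : ↥I → K,
              L x * (φ I (subword I x) a * marginal μ I a * μ x) := by rw [hiv]
        _ = ∑ x : Fin n → K, ∑ b : ↥I → K,
              μ x * (φ I (subword I x) b * marginal μ I b)
                * (L (substGenome I x b) - L x) := by
            rw [← Finset.sum_sub_distrib]
            refine Finset.sum_congr rfl fun x _ => ?_
            rw [← Finset.sum_sub_distrib]
            exact Finset.sum_congr rfl fun b _ => by ring
    rw [stepA]
    -- decomposition of the relative-entropy increments
    have hLd : ∀ (x : Fin n → K) (b : ↥I → K),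
        L (substGenome I x b) - L x
          = (Real.log (marginal μ I b) - Real.log (marginal μ I (subword I x)))
            + ((Real.log (μ (substGenome I x b) / marginal μ I b)
                - Real.log (μ x / marginal μ I (subword I x)))
            + (Real.log (∏ i : ↥I, q i.1 (subword I x i))
                - Real.log (∏ i : ↥I, q i.1 (b i)))) := by
      intro x b
      have hμz : ∀ z : Fin n → K, Real.log (μ z)
          = Real.log (μ z / marginal μ I (subword I z))
            + Real.log (marginal μ I (subword I z)) := by
        intro z
        rw [Real.log_div (ne_of_gt (hμpos z)) (ne_of_gt (hmpos _))]
        ring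
      have hLz : ∀ z : Fin n → K, L z = Real.log (μ z) - Real.log (Q z) := by
        intro z
        simp only [hLdef, hhdef]
        exact Real.log_div (ne_of_gt (hμpos z)) (ne_of_gt (hQpos z))
      have hps : Q (substGenome I x b) * (∏ i : ↥I, q i.1 (subword I x i))
          = Q x * (∏ i : ↥I, q i.1 (b i)) := by
        simpa [hQdef, subword] using prod_subst q I x b
      have hQr : Real.log (Q (substGenome I x b)) + Real.log (∏ i : ↥I, q i.1 (subword I x i))
          = Real.log (Q x) + Real.log (∏ i : ↥I, q i.1 (b i)) := by
        rw [← Real.log_mul (ne_of_gt (hQpos _)) (ne_of_gt (hqIpos (subword I x))),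
            ← Real.log_mul (ne_of_gt (hQpos _)) (ne_of_gt (hqIpos b)), hps]
      have e1 := hLz (substGenome I x b)
      have e2 := hLz x
      have e3 := hμz (substGenome I x b)
      have e4 := hμz x
      rw [subword_substGenome] at e3
      rw [e1, e2, e3, e4]
      linarith [hQr]
    -- symmetric/antisymmetric cancellation
    have hasym : ∀ g : (↥I → K) → ℝ,
        ∑ x : Fin n → K, ∑ b : ↥I → K,
          μ x * (φ I (subword I x) b * marginal μ I b) * (g b - g (subword I x)) = 0 := by
      intro g
      have h1 : ∀ x : Fin n → K,
          ∑ b : ↥I → K, μ x * (φ I (subword I x) b * marginal μ I b) * (g b - g (subword I x))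
            = μ x * ∑ b : ↥I → K,
                φ I (subword I x) b * marginal μ I b * (g b - g (subword I x)) := by
        intro x
        rw [Finset.mul_sum]
        exact Finset.sum_congr rfl fun b _ => by ring
      simp_rw [h1]
      rw [sum_mul_subword μ I
        (G := fun u => ∑ b : ↥I → K, φ I u b * marginal μ I b * (g b - g u))]
      have h2 : ∀ u : ↥I → K,
          marginal μ I u * (∑ b : ↥I → K, φ I u b * marginal μ I b * (g b - g u))
            = ∑ b : ↥I → K, φ I u b * marginal μ I u * marginal μ I b * (g b - g u) := by
        intro u
        rw [Finset.mul_sum]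
        exact Finset.sum_congr rfl fun b _ => by ring
      simp_rw [h2]
      have hW : (∑ u : ↥I → K, ∑ b : ↥I → K,
          φ I u b * marginal μ I u * marginal μ I b * (g b - g u))
          = - ∑ u : ↥I → K, ∑ b : ↥I → K,
              φ I u b * marginal μ I u * marginal μ I b * (g b - g u) := by
        have hterm : ∀ u b : ↥I → K,
            φ I b u * marginal μ I b * marginal μ I u * (g u - g b)
              = - (φ I u b * marginal μ I u * marginal μ I b * (g b - g u)) := by
          intro u b
          rw [hφ_symm]
          ring
        calc (∑ u : ↥I → K, ∑ b : ↥I → K,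
            φ I u b * marginal μ I u * marginal μ I b * (g b - g u))
            = ∑ b : ↥I → K, ∑ u : ↥I → K,
                φ I u b * marginal μ I u * marginal μ I b * (g b - g u) := Finset.sum_comm
          _ = ∑ u : ↥I → K, ∑ b : ↥I → K,
                - (φ I u b * marginal μ I u * marginal μ I b * (g b - g u)) :=
              Finset.sum_congr rfl fun u _ => Finset.sum_congr rfl fun b _ => hterm u b
          _ = - ∑ u : ↥I → K, ∑ b : ↥I → K,
                φ I u b * marginal μ I u * marginal μ I b * (g b - g u) := by
              simp [Finset.sum_neg_distrib]
      linarith [hW]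
    -- the conditional-entropy part is nonpositive
    have hP2 : ∑ x : Fin n → K, ∑ b : ↥I → K,
        μ x * (φ I (subword I x) b * marginal μ I b)
          * (Real.log (μ (substGenome I x b) / marginal μ I b)
              - Real.log (μ x / marginal μ I (subword I x))) ≤ 0 := by
      have hbd : ∀ (x : Fin n → K) (b : ↥I → K),
          μ x * (φ I (subword I x) b * marginal μ I b)
            * (Real.log (μ (substGenome I x b) / marginal μ I b)
                - Real.log (μ x / marginal μ I (subword I x)))
          ≤ (φ I (subword I x) b * marginal μ I b)
              * (marginal μ I (subword I x)
                * (μ (substGenome I x b) / marginal μ I b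
                    - μ x / marginal μ I (subword I x))) := by
        intro x b
        have hwx : 0 < μ x / marginal μ I (subword I x) :=
          div_pos (hμpos x) (hmpos _)
        have hwy : 0 < μ (substGenome I x b) / marginal μ I b :=
          div_pos (hμpos _) (hmpos b)
        have hlg : Real.log (μ (substGenome I x b) / marginal μ I b)
            - Real.log (μ x / marginal μ I (subword I x))
            ≤ (μ (substGenome I x b) / marginal μ I b)
                / (μ x / marginal μ I (subword I x)) - 1 := by
          rw [← Real.log_div (ne_of_gt hwy) (ne_of_gt hwx)]
          exact Real.log_le_sub_one_of_pos (div_pos hwy hwx)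
        have hmain : μ x * (Real.log (μ (substGenome I x b) / marginal μ I b)
              - Real.log (μ x / marginal μ I (subword I x)))
            ≤ marginal μ I (subword I x)
                * (μ (substGenome I x b) / marginal μ I b
                    - μ x / marginal μ I (subword I x)) := by
          calc μ x * (Real.log (μ (substGenome I x b) / marginal μ I b)
                - Real.log (μ x / marginal μ I (subword I x)))
              ≤ μ x * ((μ (substGenome I x b) / marginal μ I b)
                  / (μ x / marginal μ I (subword I x)) - 1) :=
                mul_le_mul_of_nonneg_left hlg (hμ_nonneg x)
            _ = marginal μ I (subword I x)
                  * (μ (substGenome I x b) / marginal μ I b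
                      - μ x / marginal μ I (subword I x)) := by
                have hμne : μ x ≠ 0 := ne_of_gt (hμpos x)
                have hmb : marginal μ I b ≠ 0 := ne_of_gt (hmpos b)
                have hmu : marginal μ I (subword I x) ≠ 0 := ne_of_gt (hmpos _)
                field_simp
        calc μ x * (φ I (subword I x) b * marginal μ I b)
            * (Real.log (μ (substGenome I x b) / marginal μ I b)
                - Real.log (μ x / marginal μ I (subword I x)))
            = (φ I (subword I x) b * marginal μ I b)
                * (μ x * (Real.log (μ (substGenome I x b) / marginal μ I b)
                    - Real.log (μ x / marginal μ I (subword I x)))) := by ring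
          _ ≤ (φ I (subword I x) b * marginal μ I b)
                * (marginal μ I (subword I x)
                  * (μ (substGenome I x b) / marginal μ I b
                      - μ x / marginal μ I (subword I x))) :=
              mul_le_mul_of_nonneg_left hmain
                (mul_nonneg (hφ_nonneg _ _ _) (hmpos b).le)
      have hz : ∑ x : Fin n → K, ∑ b : ↥I → K,
          (φ I (subword I x) b * marginal μ I b)
            * (marginal μ I (subword I x)
              * (μ (substGenome I x b) / marginal μ I b
                  - μ x / marginal μ I (subword I x))) = 0 := by
        have hexp : ∀ (x : Fin n → K) (b : ↥I → K),
            (φ I (subword I x) b * marginal μ I b)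
              * (marginal μ I (subword I x)
                * (μ (substGenome I x b) / marginal μ I b
                    - μ x / marginal μ I (subword I x)))
            = φ I (subword I x) b * marginal μ I (subword I x) * μ (substGenome I x b)
              - φ I (subword I x) b * marginal μ I b * μ x := by
          intro x b
          have h1 : marginal μ I b ≠ 0 := ne_of_gt (hmpos b)
          have h2 : marginal μ I (subword I x) ≠ 0 := ne_of_gt (hmpos _)
          field_simp
        simp_rw [hexp]
        simp_rw [Finset.sum_sub_distrib]
        have h5 : ∑ x : Fin n → K, ∑ b : ↥I → K,
            φ I b (subword I x) * marginal μ I b * μ x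
            = ∑ x : Fin n → K, ∑ b : ↥I → K,
              φ I (subword I x) b * marginal μ I (subword I x) * μ (substGenome I x b) := by
          simpa [subword_substGenome, substGenome_substGenome, substGenome_subword] using
            sum_subst_invol I (F := fun x b =>
              φ I (subword I x) b * marginal μ I (subword I x) * μ (substGenome I x b))
        rw [← h5, sub_eq_zero]
        exact Finset.sum_congr rfl fun x _ => Finset.sum_congr rfl fun b _ => by
          rw [hφ_symm]
      calc ∑ x : Fin n → K, ∑ b : ↥I → K,
          μ x * (φ I (subword I x) b * marginal μ I b)
            * (Real.log (μ (substGenome I x b) / marginal μ I b)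
                - Real.log (μ x / marginal μ I (subword I x)))
          ≤ ∑ x : Fin n → K, ∑ b : ↥I → K,
            (φ I (subword I x) b * marginal μ I b)
              * (marginal μ I (subword I x)
                * (μ (substGenome I x b) / marginal μ I b
                    - μ x / marginal μ I (subword I x))) :=
            Finset.sum_le_sum fun x _ => Finset.sum_le_sum fun b _ => hbd x b
        _ = 0 := hz
    -- put things together
    have h3 : ∑ x : Fin n → K, ∑ b : ↥I → K,
        μ x * (φ I (subword I x) b * marginal μ I b)
          * (Real.log (∏ i : ↥I, q i.1 (subword I x i))
              - Real.log (∏ i : ↥I, q i.1 (b i))) = 0 := by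
      have := hasym (fun a => - Real.log (∏ i : ↥I, q i.1 (a i)))
      rw [← this]
      exact Finset.sum_congr rfl fun x _ => Finset.sum_congr rfl fun b _ => by ring
    have h1' := hasym (fun a => Real.log (marginal μ I a))
    have hsplit : ∑ x : Fin n → K, ∑ b : ↥I → K,
        μ x * (φ I (subword I x) b * marginal μ I b) * (L (substGenome I x b) - L x)
        = (∑ x : Fin n → K, ∑ b : ↥I → K,
            μ x * (φ I (subword I x) b * marginal μ I b)
              * (Real.log (marginal μ I b) - Real.log (marginal μ I (subword I x))))
          + ((∑ x : Fin n → K, ∑ b : ↥I → K,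
            μ x * (φ I (subword I x) b * marginal μ I b)
              * (Real.log (μ (substGenome I x b) / marginal μ I b)
                  - Real.log (μ x / marginal μ I (subword I x))))
          + (∑ x : Fin n → K, ∑ b : ↥I → K,
            μ x * (φ I (subword I x) b * marginal μ I b)
              * (Real.log (∏ i : ↥I, q i.1 (subword I x i))
                  - Real.log (∏ i : ↥I, q i.1 (b i))))) := by
      simp_rw [hLd, mul_add, Finset.sum_add_distrib]
    rw [hsplit, h1', h3]
    simpa using hP2
  -- mutation entropy production is zero
  have hEM_le : (∑ x : Fin n → K, ∑ i, ∑ c,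
      μ x * α i (x i) c * (L (Function.update x i c) - L x)) ≤ 0 := by
    calc (∑ x : Fin n → K, ∑ i, ∑ c, μ x * α i (x i) c * (L (Function.update x i c) - L x))
        ≤ ∑ x : Fin n → K, ∑ i, ∑ c,
            α i (x i) c * (Q x * h (Function.update x i c) - μ x) :=
          Finset.sum_le_sum fun x _ => Finset.sum_le_sum fun i _ =>
            Finset.sum_le_sum fun c _ => hT_le x i c
      _ = 0 := hBd0
  have hEM0 : (∑ x : Fin n → K, ∑ i, ∑ c,
      μ x * α i (x i) c * (L (Function.update x i c) - L x)) = 0 := by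
    have h2 : ∑ I : Finset (Fin n), (∑ x : Fin n → K, L x * (∑ a : ↥I → K,
        (φ I a (subword I x) * marginal μ I (subword I x) * μ (substGenome I x a)
          - φ I (subword I x) a * marginal μ I a * μ x))) ≤ 0 :=
      Finset.sum_nonpos fun I _ => hSI_le I
    rw [hEM_T] at key0
    nlinarith
  -- termwise equality
  have heq : ∀ (x : Fin n → K) (i : Fin n) (c : K),
      μ x * α i (x i) c * (L (Function.update x i c) - L x)
        = α i (x i) c * (Q x * h (Function.update x i c) - μ x) := by
    have hle1 : ∀ x ∈ (Finset.univ : Finset (Fin n → K)),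
        (∑ i, ∑ c, μ x * α i (x i) c * (L (Function.update x i c) - L x))
          ≤ ∑ i, ∑ c, α i (x i) c * (Q x * h (Function.update x i c) - μ x) :=
      fun x _ => Finset.sum_le_sum fun i _ => Finset.sum_le_sum fun c _ => hT_le x i c
    have e1 := (Finset.sum_eq_sum_iff_of_le hle1).1 (by rw [hEM0, hBd0])
    intro x i c
    have e2 := (Finset.sum_eq_sum_iff_of_le
      (fun i (_ : i ∈ Finset.univ) => Finset.sum_le_sum fun c _ => hT_le x i c)).1
      (e1 x (Finset.mem_univ x)) i (Finset.mem_univ i)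
    exact (Finset.sum_eq_sum_iff_of_le (fun c _ => hT_le x i c)).1 e2 c (Finset.mem_univ c)
  -- constancy of h
  have hstep : ∀ (x : Fin n → K) (i : Fin n) (c : K), 0 < α i (x i) c →
      h (Function.update x i c) = h x := by
    intro x i c hαc
    by_cases hc : c = x i
    · rw [hc, Function.update_eq_self]
    · have ht := heq x i c
      have hA : α i (x i) c * (μ x * (L (Function.update x i c) - L x))
          = α i (x i) c * (Q x * h (Function.update x i c) - μ x) := by
        rw [← ht]; ring
      have hA' := mul_left_cancel₀ (ne_of_gt hαc) hA
      have hy := hhpos (Function.update x i c)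
      have hx' := hhpos x
      have htpos : 0 < h (Function.update x i c) / h x := div_pos hy hx'
      have hlogt : Real.log (h (Function.update x i c) / h x)
          = h (Function.update x i c) / h x - 1 := by
        rw [hlogdiff x (Function.update x i c)] at hA'
        have hQhx : Q x * h x ≠ 0 := ne_of_gt (mul_pos (hQpos x) hx')
        apply mul_left_cancel₀ hQhx
        rw [hμQ x] at hA'
        rw [hA']
        field_simp
      have ht1 : h (Function.update x i c) / h x = 1 := by
        by_contra h1
        exact absurd hlogt (ne_of_lt (Real.log_lt_sub_one_of_pos htpos h1))
      rw [div_eq_one_iff_eq (ne_of_gt hx')] at ht1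
      exact ht1
  have hconst : ∀ x y : Fin n → K, h x = h y := by
    intro x y
    exact reach hα_conn (fun z => h x = h z)
      (fun z i c hc hzz => by
        show h x = h (Function.update z i c)
        rw [hstep z i c hc]; exact hzz) x y rfl
  have hQsum : ∑ x : Fin n → K, Q x = 1 := by
    simp only [hQdef]
    rw [← Fintype.prod_sum (fun i a => q i a)]
    simp [hq_sum]
  funext z
  have hsum : ∑ x : Fin n → K, μ x = h z * ∑ x : Fin n → K, Q x := by
    rw [Finset.mul_sum]
    refine Finset.sum_congr rfl fun x _ => ?_
    rw [hμQ x, hconst x z]; ring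
  have hz1 : h z = 1 := by
    rw [hμ_sum, hQsum, mul_one] at hsum
    exact hsum.symm
  have := hμQ z
  rw [hz1, mul_one] at this
  simpa [hQdef] using this
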